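/- With the same notation (A² > 0, ρ > 0), the spatial momenta satisfy Σᵢ Pᵢ² = ρ²(T'² + ε|Y'|² − εT'² − (3/4)ε²T'²), where ε = |Ẏ⊥|²|Y'|²/A². -/

import Mathlib

open scoped RealInnerProductSpace

theorem stmt15 {n : ℕ} (ρ td ts : ℝ) (u v : EuclideanSpace ℝ (Fin n)) (hv : v ≠ 0)
    (hρ : 0 < ρ)
    (tdperp : ℝ) (uperp : EuclideanSpace ℝ (Fin n)) (A2 ε P : ℝ)
    (Pvec : EuclideanSpace ℝ (Fin n))
    (htd : tdperp = td - (⟪u, v⟫ / ‖v‖ ^ 2) * ts)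
    (hu : uperp = u - (⟪u, v⟫ / ‖v‖ ^ 2) • v)
    (hA2 : A2 = tdperp ^ 2 * ‖v‖ ^ 2 + ts ^ 2 * ‖uperp‖ ^ 2)
    (hApos : 0 < A2)
    (hε : ε = ‖uperp‖ ^ 2 * ‖v‖ ^ 2 / A2)
    (hP : P = -(ρ / Real.sqrt A2) * (ε / 2 + 1) * (tdperp * ‖v‖ ^ 2))
    (hPvec : Pvec = (ρ / Real.sqrt A2) •
      (‖v‖ ^ 2 • uperp - (ε / 2 + 1) • (ts ^ 2 • uperp - (tdperp * ts) • v))) :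
    ‖Pvec‖ ^ 2 = ρ ^ 2 * (ts ^ 2 + ε * ‖v‖ ^ 2 - ε * ts ^ 2 - (3 / 4) * ε ^ 2 * ts ^ 2) := by
  have hv2 : ‖v‖ ^ 2 ≠ 0 := pow_ne_zero _ (norm_ne_zero_iff.mpr hv)
  have horth : ⟪uperp, v⟫ = 0 := by
    rw [hu, inner_sub_left, real_inner_smul_left, real_inner_self_eq_norm_sq]
    field_simp; ring
  set c : ℝ := ρ / Real.sqrt A2 with hc
  have hPvec' : Pvec = (c * (‖v‖ ^ 2 - (ε / 2 + 1) * ts ^ 2)) • uperp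
      + (c * ((ε / 2 + 1) * (tdperp * ts))) • v := by
    rw [hPvec]; module
  have hnorm : ‖Pvec‖ ^ 2 = (c * (‖v‖ ^ 2 - (ε / 2 + 1) * ts ^ 2)) ^ 2 * ‖uperp‖ ^ 2
      + (c * ((ε / 2 + 1) * (tdperp * ts))) ^ 2 * ‖v‖ ^ 2 := by
    rw [hPvec', norm_add_sq_real, real_inner_smul_left, real_inner_smul_right, horth,
      norm_smul, norm_smul]
    simp [Real.norm_eq_abs, mul_pow, sq_abs]
  have hc2 : c ^ 2 = ρ ^ 2 / A2 := by
    rw [hc, div_pow, Real.sq_sqrt hApos.le]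
  have hA2ne : A2 ≠ 0 := hApos.ne'
  have hεA : ε * A2 = ‖uperp‖ ^ 2 * ‖v‖ ^ 2 := by
    rw [hε]; field_simp
  have htdp : tdperp ^ 2 * ‖v‖ ^ 2 = A2 - ts ^ 2 * ‖uperp‖ ^ 2 := by linarith
  have key : (‖v‖ ^ 2 - (ε / 2 + 1) * ts ^ 2) ^ 2 * ‖uperp‖ ^ 2
      + ((ε / 2 + 1) * (tdperp * ts)) ^ 2 * ‖v‖ ^ 2
      = A2 * (ts ^ 2 + ε * ‖v‖ ^ 2 - ε * ts ^ 2 - (3 / 4) * ε ^ 2 * ts ^ 2) := by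
    linear_combination ((ε / 2 + 1) ^ 2 * ts ^ 2) * htdp
      + ((ε + 2) * ts ^ 2 - ‖v‖ ^ 2) * hεA
  calc ‖Pvec‖ ^ 2 = c ^ 2 * ((‖v‖ ^ 2 - (ε / 2 + 1) * ts ^ 2) ^ 2 * ‖uperp‖ ^ 2
        + ((ε / 2 + 1) * (tdperp * ts)) ^ 2 * ‖v‖ ^ 2) := by rw [hnorm]; ring
    _ = ρ ^ 2 / A2 * (A2 * (ts ^ 2 + ε * ‖v‖ ^ 2 - ε * ts ^ 2 - 3 / 4 * ε ^ 2 * ts ^ 2)) := by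
        rw [hc2, key]
    _ = _ := by field_simp
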